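/- If $u:(0,\infty)\to\mathbb{R}$ is twice differentiable, $\lim_{x\to\infty} x^2 u''(x) = +\infty$, and $\mu_* := -\lim_{x\to\infty} u'(x) \in \mathbb{R}$, then the series $S_\mu := \sum_{k=1}^\infty e^{-\mu k - u(k)}$ satisfies $\lim_{\mu \downarrow \mu_*} S_\mu = \infty$; in particular $S_{\mu_*} = \infty$. -/

import Mathlib

open Filter Set

/-- If `u` is twice differentiable on `(0,∞)`, `x^2 u''(x) → +∞`, and
`u'(x) → -μ⋆` with `μ⋆ ∈ ℝ`, then `S_μ = ∑_{k≥1} e^{-μ k - u(k)}` tends to `∞`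
as `μ ↓ μ⋆`; in particular the series diverges at `μ = μ⋆`. -/
theorem S_mu_tendsto_atTop
    (u : ℝ → ℝ) (μstar : ℝ)
    (hdiff : ∀ x ∈ Set.Ioi (0:ℝ),
      DifferentiableAt ℝ u x ∧ DifferentiableAt ℝ (deriv u) x)
    (hlim : Tendsto (fun x => x ^ 2 * deriv (deriv u) x) atTop atTop)
    (hmu : Tendsto (deriv u) atTop (nhds (-μstar))) :
    Tendsto
      (fun μ : ℝ => ∑' k : ℕ, Real.exp (-(μ * ((k : ℝ) + 1)) - u ((k : ℝ) + 1)))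
      (nhdsWithin μstar (Set.Ioi μstar)) atTop ∧
    ¬ Summable (fun k : ℕ => Real.exp (-(μstar * ((k : ℝ) + 1)) - u ((k : ℝ) + 1))) := by
  -- Step A: find X ≥ 1 past which u'' > 0
  obtain ⟨X₀, hX₀⟩ := eventually_atTop.mp (hlim.eventually_gt_atTop 0)
  set X : ℝ := max X₀ 1 with hXdef
  have hX1 : (1:ℝ) ≤ X := le_max_right _ _
  have hXpos : (0:ℝ) < X := lt_of_lt_of_le one_pos hX1
  have hupos : ∀ x, X ≤ x → 0 < deriv (deriv u) x := by
    intro x hx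
    have h1 : (0:ℝ) < x := lt_of_lt_of_le hXpos hx
    have h2 := hX₀ x (le_trans (le_max_left _ _) hx)
    nlinarith [sq_nonneg x]
  have hmem : ∀ x : ℝ, X ≤ x → x ∈ Set.Ioi (0:ℝ) := fun x hx => lt_of_lt_of_le hXpos hx
  -- derivative of u plus a linear function
  have hderiv_add : ∀ (c x : ℝ), 0 < x →
      deriv (fun y => u y + c * y) x = deriv u x + c := by
    intro c x hx
    have h1 : HasDerivAt (fun y => u y + c * y) (deriv u x + c) x := by
      exact ((hdiff x hx).1.hasDerivAt.add ((hasDerivAt_id x).const_mul c)).congr_deriv (by simp)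
    exact h1.deriv
  have hdiff_add : ∀ (c x : ℝ), 0 < x → DifferentiableAt ℝ (fun y => u y + c * y) x :=
    fun c x hx => (hdiff x hx).1.add (differentiableAt_id.const_mul c)
  -- Step B: u' is strictly monotone on [X, ∞), hence u' ≤ -μ* there
  have hsm : StrictMonoOn (deriv u) (Ici X) := by
    apply strictMonoOn_of_deriv_pos (convex_Ici X)
    · intro x hx
      exact ((hdiff x (hmem x hx)).2.continuousAt).continuousWithinAt
    · intro x hx
      rw [interior_Ici] at hx
      exact hupos x hx.le
  have hle : ∀ x, X ≤ x → deriv u x ≤ -μstar := by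
    intro x hx
    refine ge_of_tendsto hmu ?_
    filter_upwards [eventually_ge_atTop (x + 1)] with z hz
    exact (hsm hx (show z ∈ Ici X by simp only [mem_Ici]; linarith) (by linarith)).le
  -- Step C: u x + μ* x is antitone on [X, ∞)
  have hanti : AntitoneOn (fun x => u x + μstar * x) (Ici X) := by
    apply antitoneOn_of_deriv_nonpos (convex_Ici X)
    · intro x hx
      exact (hdiff_add μstar x (hmem x hx)).continuousAt.continuousWithinAt
    · intro x hx
      rw [interior_Ici] at hx
      exact (hdiff_add μstar x (hmem x hx.le)).differentiableWithinAt
    · intro x hx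
      rw [interior_Ici] at hx
      rw [hderiv_add μstar x (hmem x hx.le)]
      have := hle x hx.le
      linarith
  -- Step D: for ε > 0, a linear lower bound on u eventually
  have hlow : ∀ ε : ℝ, 0 < ε → ∃ X₁, X ≤ X₁ ∧ ∀ x, X₁ ≤ x →
      u X₁ + (μstar + ε) * X₁ ≤ u x + (μstar + ε) * x := by
    intro ε hε
    have hev : ∀ᶠ z in atTop, -μstar - ε < deriv u z :=
      hmu.eventually (eventually_gt_nhds (by linarith))
    obtain ⟨a, ha⟩ := eventually_atTop.mp hev
    refine ⟨max a X, le_max_right _ _, ?_⟩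
    have hmono : MonotoneOn (fun x => u x + (μstar + ε) * x) (Ici (max a X)) := by
      apply monotoneOn_of_deriv_nonneg (convex_Ici _)
      · intro x hx
        have hx0 : 0 < x := lt_of_lt_of_le hXpos (le_trans (le_max_right _ _) hx)
        exact (hdiff_add (μstar + ε) x hx0).continuousAt.continuousWithinAt
      · intro x hx
        rw [interior_Ici] at hx
        have hx0 : 0 < x := lt_of_lt_of_le hXpos (le_trans (le_max_right _ _) hx.le)
        exact (hdiff_add (μstar + ε) x hx0).differentiableWithinAt
      · intro x hx
        rw [interior_Ici] at hx
        have hx0 : 0 < x := lt_of_lt_of_le hXpos (le_trans (le_max_right _ _) hx.le)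
        rw [hderiv_add (μstar + ε) x hx0]
        have := ha x (le_trans (le_max_left _ _) hx.le)
        linarith
    intro x hx
    exact hmono self_mem_Ici hx hx
  -- Summability for μ > μ*
  have hsummable : ∀ μ : ℝ, μstar < μ →
      Summable (fun k : ℕ => Real.exp (-(μ * ((k : ℝ) + 1)) - u ((k : ℝ) + 1))) := by
    intro μ hμ
    have hεpos : 0 < (μ - μstar) / 2 := by linarith
    set ε : ℝ := (μ - μstar) / 2 with hεdef
    obtain ⟨X₁, hX₁X, hX₁⟩ := hlow ε hεpos
    set c₁ : ℝ := u X₁ + (μstar + ε) * X₁ with hc₁def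
    set m : ℕ := ⌈X₁⌉₊ with hmdef
    rw [← summable_nat_add_iff m]
    refine Summable.of_nonneg_of_le (f := fun k : ℕ =>
        Real.exp (-c₁ - ε * (m : ℝ)) * Real.exp (-ε) ^ k)
      (fun k => (Real.exp_pos _).le) ?_
      ((summable_geometric_of_lt_one (Real.exp_pos _).le
        (Real.exp_lt_one_iff.2 (by linarith))).mul_left _)
    intro k
    have hxge : X₁ ≤ ((k + m : ℕ) : ℝ) + 1 := by
      have h1 : X₁ ≤ (m : ℝ) := Nat.le_ceil X₁
      push_cast
      have : (0:ℝ) ≤ (k : ℝ) := Nat.cast_nonneg k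
      linarith
    have hb := hX₁ _ hxge
    have hμeq : μ = μstar + 2 * ε := by rw [hεdef]; ring
    have h1 : Real.exp (-(μ * (((k + m : ℕ) : ℝ) + 1)) - u (((k + m : ℕ) : ℝ) + 1))
        ≤ Real.exp (-c₁ - ε * (m : ℝ) - ε * (k : ℝ)) := by
      apply Real.exp_le_exp.2
      rw [hμeq]
      push_cast at hb ⊢
      linarith
    have h2 : Real.exp (-c₁ - ε * (m : ℝ)) * Real.exp (-ε) ^ k
        = Real.exp (-c₁ - ε * (m : ℝ) - ε * (k : ℝ)) := by
      rw [← Real.exp_nat_mul, ← Real.exp_add]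
      ring_nf
    calc Real.exp (-(μ * (((k + m : ℕ) : ℝ) + 1)) - u (((k + m : ℕ) : ℝ) + 1))
        ≤ Real.exp (-c₁ - ε * (m : ℝ) - ε * (k : ℝ)) := h1
      _ = Real.exp (-c₁ - ε * (m : ℝ)) * Real.exp (-ε) ^ k := h2.symm
  -- lower bound on terms for k+1 ≥ X
  have hterm : ∀ k : ℕ, X ≤ (k : ℝ) + 1 →
      Real.exp (-(u X + μstar * X)) ≤ Real.exp (-(μstar * ((k : ℝ) + 1)) - u ((k : ℝ) + 1)) := by
    intro k hk
    apply Real.exp_le_exp.2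
    have := hanti self_mem_Ici (show ((k:ℝ)+1) ∈ Ici X from hk) hk
    simp only at this
    linarith
  -- divergence at μ*
  have hns : ¬ Summable (fun k : ℕ => Real.exp (-(μstar * ((k : ℝ) + 1)) - u ((k : ℝ) + 1))) := by
    intro hs
    have h0 := hs.tendsto_atTop_zero
    have h1 : ∀ᶠ k : ℕ in atTop,
        Real.exp (-(μstar * ((k : ℝ) + 1)) - u ((k : ℝ) + 1)) < Real.exp (-(u X + μstar * X)) :=
      h0.eventually (eventually_lt_nhds (Real.exp_pos _))
    have h2 : ∀ᶠ k : ℕ in atTop, X ≤ (k : ℝ) + 1 := by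
      filter_upwards [eventually_ge_atTop ⌈X⌉₊] with k hk
      have : X ≤ (⌈X⌉₊ : ℝ) := Nat.le_ceil X
      have : (⌈X⌉₊ : ℝ) ≤ (k : ℝ) := Nat.cast_le.2 hk
      linarith [Nat.le_ceil X]
    obtain ⟨k, hk1, hk2⟩ := (h1.and h2).exists
    exact absurd (hterm k hk2) (not_le.2 hk1)
  refine ⟨?_, hns⟩
  -- the tendsto statement
  rw [tendsto_atTop]
  intro M
  set δ : ℝ := Real.exp (-(u X + μstar * X)) with hδdef
  have hδpos : 0 < δ := Real.exp_pos _
  obtain ⟨N, hN⟩ := exists_nat_gt (M / δ)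
  set F : Finset ℕ := Finset.Ico ⌈X⌉₊ (⌈X⌉₊ + N) with hFdef
  have hcard : F.card = N := by simp [hFdef]
  have hFX : ∀ k ∈ F, X ≤ (k : ℝ) + 1 := by
    intro k hk
    have h1 : ⌈X⌉₊ ≤ k := (Finset.mem_Ico.mp hk).1
    have h2 : X ≤ (⌈X⌉₊ : ℝ) := Nat.le_ceil X
    have h3 : ((⌈X⌉₊ : ℕ) : ℝ) ≤ (k : ℝ) := Nat.cast_le.2 h1
    linarith
  have hcont : ContinuousAt
      (fun μ : ℝ => ∑ k ∈ F, Real.exp (-(μ * ((k : ℝ) + 1)) - u ((k : ℝ) + 1))) μstar := by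
    apply Continuous.continuousAt
    apply continuous_finset_sum
    intro k _
    exact Real.continuous_exp.comp (((continuous_id.mul continuous_const).neg).sub continuous_const)
  have hval : M < ∑ k ∈ F, Real.exp (-(μstar * ((k : ℝ) + 1)) - u ((k : ℝ) + 1)) := by
    have h1 : (N : ℝ) * δ ≤ ∑ k ∈ F, Real.exp (-(μstar * ((k : ℝ) + 1)) - u ((k : ℝ) + 1)) := by
      calc (N : ℝ) * δ = ∑ _k ∈ F, δ := by rw [Finset.sum_const, hcard, nsmul_eq_mul]
        _ ≤ _ := Finset.sum_le_sum (fun k hk => hterm k (hFX k hk))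
    have h2 : M < (N : ℝ) * δ := by
      rw [div_lt_iff₀ hδpos] at hN; linarith
    linarith
  have hev : ∀ᶠ μ in nhds μstar,
      M < ∑ k ∈ F, Real.exp (-(μ * ((k : ℝ) + 1)) - u ((k : ℝ) + 1)) :=
    hcont.eventually (eventually_gt_nhds hval)
  filter_upwards [hev.filter_mono nhdsWithin_le_nhds, self_mem_nhdsWithin] with μ hμM hμ
  have hsum := hsummable μ hμ
  calc M ≤ ∑ k ∈ F, Real.exp (-(μ * ((k : ℝ) + 1)) - u ((k : ℝ) + 1)) := hμM.le
    _ ≤ ∑' k : ℕ, Real.exp (-(μ * ((k : ℝ) + 1)) - u ((k : ℝ) + 1)) :=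
        Summable.sum_le_tsum F (fun k _ => (Real.exp_pos _).le) hsum
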